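/- Let T be a random variable with P[T > x] = ∫_0^∞ e^{-y}/(1 + e^{2x} y) dy for all real x. Then E[T] = γ/2, where γ is the Euler–Mascheroni constant. -/

import Mathlib

open MeasureTheory Set Real Filter


noncomputable def Gf (x : ℝ) : ℝ := ∫ y in Set.Ioi (0:ℝ), Real.exp (-y) / (1 + Real.exp (2*x) * y)

lemma Gf_den_pos (x y : ℝ) (hy : 0 ≤ y) : (0:ℝ) < 1 + Real.exp (2*x) * y := by positivity

lemma Gf_meas : Measurable (fun p : ℝ × ℝ => Real.exp (-p.2) / (1 + Real.exp (2*p.1) * p.2)) := by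
  apply Measurable.div
  · exact Real.measurable_exp.comp (measurable_snd.neg)
  · exact (measurable_const.add ((Real.measurable_exp.comp ((measurable_fst.const_mul 2))).mul measurable_snd))

lemma Gf_integrand_integrable (x : ℝ) :
    IntegrableOn (fun y => Real.exp (-y) / (1 + Real.exp (2*x) * y)) (Set.Ioi 0) := by
  have h1 : IntegrableOn (fun y : ℝ => Real.exp (-y)) (Set.Ioi (0:ℝ)) := by
    simpa using exp_neg_integrableOn_Ioi 0 one_pos
  refine Integrable.mono h1 ((Gf_meas.comp (measurable_const.prodMk measurable_id)).aestronglyMeasurable) ?_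
  filter_upwards [ae_restrict_mem measurableSet_Ioi] with y hy
  have hy0 : (0:ℝ) < y := hy
  have hd := Gf_den_pos x y hy0.le
  rw [Real.norm_eq_abs, Real.norm_eq_abs, abs_of_pos (Real.exp_pos _),
    abs_of_pos (div_pos (Real.exp_pos _) hd)]
  rw [div_le_iff₀ hd]
  nlinarith [Real.exp_pos (-y), Real.exp_pos (2*x), mul_pos (Real.exp_pos (2*x)) hy0]

lemma Gf_nonneg (x : ℝ) : 0 ≤ Gf x := by
  apply setIntegral_nonneg measurableSet_Ioi
  intro y hy
  exact div_nonneg (Real.exp_pos _).le (Gf_den_pos x y (le_of_lt hy)).le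

lemma Gf_le_one (x : ℝ) : Gf x ≤ 1 := by
  have h1 : IntegrableOn (fun y : ℝ => Real.exp (-y)) (Set.Ioi (0:ℝ)) := by
    simpa using exp_neg_integrableOn_Ioi 0 one_pos
  have := setIntegral_mono_on (Gf_integrand_integrable x) h1 measurableSet_Ioi ?_
  · calc Gf x ≤ ∫ y in Set.Ioi (0:ℝ), Real.exp (-y) := this
      _ = 1 := by simpa using integral_exp_neg_Ioi 0
  · intro y hy
    have hd := Gf_den_pos x y (le_of_lt (hy : (0:ℝ) < y))
    rw [div_le_iff₀ hd]
    nlinarith [Real.exp_pos (-y), mul_pos (Real.exp_pos (2*x)) (hy : (0:ℝ) < y)]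

lemma Gf_le (t : ℝ) (ht : 0 < t) : Gf t ≤ 2 * Real.exp (-t) := by
  set a := Real.exp (-t) with ha
  have ha0 : 0 < a := Real.exp_pos _
  have hsplit : Set.Ioi (0:ℝ) = Set.Ioc 0 a ∪ Set.Ioi a := (Set.Ioc_union_Ioi_eq_Ioi ha0.le).symm
  have hint := Gf_integrand_integrable t
  have hint1 : IntegrableOn (fun y => Real.exp (-y) / (1 + Real.exp (2*t) * y)) (Set.Ioc 0 a) :=
    hint.mono_set Set.Ioc_subset_Ioi_self
  have hint2 : IntegrableOn (fun y => Real.exp (-y) / (1 + Real.exp (2*t) * y)) (Set.Ioi a) :=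
    hint.mono_set (Set.Ioi_subset_Ioi ha0.le)
  have hGf : Gf t = (∫ y in Set.Ioc (0:ℝ) a, Real.exp (-y) / (1 + Real.exp (2*t) * y))
      + ∫ y in Set.Ioi a, Real.exp (-y) / (1 + Real.exp (2*t) * y) := by
    rw [Gf, hsplit]
    exact setIntegral_union (Set.Ioc_disjoint_Ioi le_rfl) measurableSet_Ioi hint1 hint2
  have hb1 : (∫ y in Set.Ioc (0:ℝ) a, Real.exp (-y) / (1 + Real.exp (2*t) * y)) ≤ a := by
    have : (∫ y in Set.Ioc (0:ℝ) a, Real.exp (-y) / (1 + Real.exp (2*t) * y))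
        ≤ ∫ _y in Set.Ioc (0:ℝ) a, (1:ℝ) := by
      apply setIntegral_mono_on hint1 (integrableOn_const (by simp))
        measurableSet_Ioc
      intro y hy
      have hd := Gf_den_pos t y (le_of_lt hy.1)
      rw [div_le_one hd]
      nlinarith [mul_pos (Real.exp_pos (2*t)) hy.1, Real.exp_le_one_iff.mpr (by linarith [hy.1] : -y ≤ 0)]
    have h2 := this
    simp [Real.volume_Ioc, ENNReal.toReal_ofReal ha0.le] at h2
    rcases h2 with h | h <;> linarith
  have hb2 : (∫ y in Set.Ioi a, Real.exp (-y) / (1 + Real.exp (2*t) * y)) ≤ Real.exp (-t) := by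
    have key : ∀ y ∈ Set.Ioi a, Real.exp (-y) / (1 + Real.exp (2*t) * y)
        ≤ Real.exp (-t) * Real.exp (-y) := by
      intro y hy
      have hya : a < y := hy
      have hy0 : 0 < y := lt_trans ha0 hya
      have hd := Gf_den_pos t y hy0.le
      rw [div_le_iff₀ hd]
      have h1 : Real.exp t ≤ 1 + Real.exp (2*t) * y := by
        have : Real.exp (2*t) * a ≤ Real.exp (2*t) * y := by nlinarith [Real.exp_pos (2*t)]
        have h2 : Real.exp (2*t) * a = Real.exp t := by
          rw [ha, ← Real.exp_add]; ring_nf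
        nlinarith
      calc Real.exp (-y) = Real.exp (-t) * Real.exp (-y) * Real.exp t := by
            rw [← Real.exp_add, ← Real.exp_add]; congr 1; ring
        _ ≤ Real.exp (-t) * Real.exp (-y) * (1 + Real.exp (2*t) * y) :=
            mul_le_mul_of_nonneg_left h1 (mul_pos (Real.exp_pos _) (Real.exp_pos _)).le
    have hexp : IntegrableOn (fun y : ℝ => Real.exp (-y)) (Set.Ioi a) := by
      have := exp_neg_integrableOn_Ioi a one_pos
      simpa using this
    have hmaj : IntegrableOn (fun y : ℝ => Real.exp (-t) * Real.exp (-y)) (Set.Ioi a) :=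
      hexp.const_mul _
    calc (∫ y in Set.Ioi a, Real.exp (-y) / (1 + Real.exp (2*t) * y))
        ≤ ∫ y in Set.Ioi a, Real.exp (-t) * Real.exp (-y) :=
          setIntegral_mono_on hint2 hmaj measurableSet_Ioi key
      _ = Real.exp (-t) * Real.exp (-a) := by
          rw [integral_const_mul, integral_exp_neg_Ioi]
      _ ≤ Real.exp (-t) * 1 := by
          apply mul_le_mul_of_nonneg_left _ (Real.exp_pos _).le
          exact Real.exp_le_one_iff.mpr (by linarith)
      _ = Real.exp (-t) := mul_one _
  rw [hGf]; rw [ha] at hb1 ⊢; linarith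


lemma exp2_prod (x : ℝ) : Real.exp (-(2*x)) * Real.exp (2*x) = 1 := by
  rw [← Real.exp_add]; simp

lemma tendsto_exp_neg2 : Tendsto (fun x : ℝ => Real.exp (-(2*x))) atTop (nhds 0) := by
  apply Real.tendsto_exp_atBot.comp
  have h2 : Tendsto (fun x : ℝ => 2*x) atTop atTop := Tendsto.const_mul_atTop two_pos tendsto_id
  exact tendsto_neg_atBot_iff.mpr h2

lemma ftc1 (y : ℝ) (hy : 0 < y) :
    ∫ x in Set.Ioi (0:ℝ), (1 + Real.exp (2*x) * y)⁻¹
      = (Real.log (1+y) - Real.log y)/2 := by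
  set F : ℝ → ℝ := fun x => -(1/2) * Real.log (Real.exp (-(2*x)) + y) with hF
  have hpos : ∀ x : ℝ, 0 < Real.exp (-(2*x)) + y := fun x => by positivity
  have hderiv : ∀ x ∈ Set.Ioi (0:ℝ), HasDerivAt F ((1 + Real.exp (2*x) * y)⁻¹) x := by
    intro x _
    have h1 : HasDerivAt (fun x : ℝ => Real.exp (-(2*x))) (Real.exp (-(2*x)) * (-2)) x := by
      have h0 : HasDerivAt (fun x : ℝ => -(2*x)) (-2) x := by
        simpa using (hasDerivAt_id x).const_mul (-2:ℝ)
      exact h0.exp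
    have h2 := ((h1.add_const y).log (hpos x).ne').const_mul (-(1/2):ℝ)
    convert h2 using 1
    · rfl
    · rfl
    have hprod := exp2_prod x
    have he : (0:ℝ) < 1 + Real.exp (2*x) * y := by positivity
    have hr : -(1/2) * (Real.exp (-(2*x)) * (-2) / (Real.exp (-(2*x)) + y))
        = Real.exp (-(2*x)) / (Real.exp (-(2*x)) + y) := by ring
    rw [hr, inv_eq_one_div, div_eq_div_iff he.ne' (hpos x).ne']
    linear_combination (-y) * hprod
  have hcont : ContinuousWithinAt F (Set.Ici 0) 0 := by
    apply Continuous.continuousWithinAt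
    have hc : Continuous fun x : ℝ => Real.exp (-(2*x)) + y := by fun_prop
    exact continuous_const.mul (hc.log (fun x => (hpos x).ne'))
  have hint : IntegrableOn (fun x => (1 + Real.exp (2*x) * y)⁻¹) (Set.Ioi (0:ℝ)) := by
    have hmaj : IntegrableOn (fun x : ℝ => y⁻¹ * Real.exp (-2*x)) (Set.Ioi (0:ℝ)) :=
      (exp_neg_integrableOn_Ioi 0 two_pos).const_mul _
    refine Integrable.mono hmaj ?_ ?_
    · apply Measurable.aestronglyMeasurable
      exact ((measurable_const.add ((Real.measurable_exp.comp (measurable_id.const_mul 2)).mul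
        measurable_const)) : Measurable fun x : ℝ => 1 + Real.exp (2*x) * y).inv
    · filter_upwards [ae_restrict_mem measurableSet_Ioi] with x _
      have he : (0:ℝ) < 1 + Real.exp (2*x) * y := by positivity
      have hey : (0:ℝ) < Real.exp (2*x) * y := by positivity
      rw [Real.norm_eq_abs, Real.norm_eq_abs, abs_of_pos (inv_pos.mpr he),
        abs_of_pos (by positivity : (0:ℝ) < y⁻¹ * Real.exp (-2*x))]
      have h1 : (1 + Real.exp (2*x)*y)⁻¹ ≤ (Real.exp (2*x)*y)⁻¹ :=
        inv_anti₀ hey (by linarith)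
      have h2 : (Real.exp (2*x)*y)⁻¹ = y⁻¹ * Real.exp (-2*x) := by
        rw [show (-2:ℝ)*x = -(2*x) by ring, Real.exp_neg, mul_inv, mul_comm]
      linarith
  have htend : Tendsto F atTop (nhds (-(1/2) * Real.log y)) := by
    have h2 : Tendsto (fun x : ℝ => Real.exp (-(2*x)) + y) atTop (nhds y) := by
      simpa using tendsto_exp_neg2.add tendsto_const_nhds
    exact ((Real.continuousAt_log hy.ne').tendsto.comp h2).const_mul _
  rw [integral_Ioi_of_hasDerivAt_of_tendsto hcont hderiv hint htend]
  rw [hF]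
  simp only [mul_zero, neg_zero, Real.exp_zero]
  ring

lemma ftc2 (y : ℝ) (hy : 0 < y) :
    ∫ x in Set.Ioi (0:ℝ), y / (Real.exp (2*x) + y) = Real.log (1+y)/2 := by
  set F : ℝ → ℝ := fun x => -(1/2) * Real.log (1 + y * Real.exp (-(2*x))) with hF
  have hpos : ∀ x : ℝ, 0 < 1 + y * Real.exp (-(2*x)) := fun x => by positivity
  have hepos : ∀ x : ℝ, 0 < Real.exp (2*x) + y := fun x => by positivity
  have hderiv : ∀ x ∈ Set.Ioi (0:ℝ), HasDerivAt F (y / (Real.exp (2*x) + y)) x := by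
    intro x _
    have h1 : HasDerivAt (fun x : ℝ => Real.exp (-(2*x))) (Real.exp (-(2*x)) * (-2)) x := by
      have h0 : HasDerivAt (fun x : ℝ => -(2*x)) (-2) x := by
        simpa using (hasDerivAt_id x).const_mul (-2:ℝ)
      exact h0.exp
    have h2 := (((h1.const_mul y).const_add 1).log (hpos x).ne').const_mul (-(1/2):ℝ)
    convert h2 using 1
    · rfl
    · rfl
    have hprod := exp2_prod x
    have hr : -(1/2) * (y * (Real.exp (-(2*x)) * (-2)) / (1 + y * Real.exp (-(2*x))))
        = y * Real.exp (-(2*x)) / (1 + y * Real.exp (-(2*x))) := by ring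
    rw [hr, div_eq_div_iff (hepos x).ne' (hpos x).ne']
    linear_combination (-y) * hprod
  have hcont : ContinuousWithinAt F (Set.Ici 0) 0 := by
    apply Continuous.continuousWithinAt
    have hc : Continuous fun x : ℝ => 1 + y * Real.exp (-(2*x)) := by fun_prop
    exact continuous_const.mul (hc.log (fun x => (hpos x).ne'))
  have hint : IntegrableOn (fun x => y / (Real.exp (2*x) + y)) (Set.Ioi (0:ℝ)) := by
    have hmaj : IntegrableOn (fun x : ℝ => y * Real.exp (-2*x)) (Set.Ioi (0:ℝ)) :=
      (exp_neg_integrableOn_Ioi 0 two_pos).const_mul _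
    refine Integrable.mono hmaj ?_ ?_
    · apply Measurable.aestronglyMeasurable
      exact measurable_const.div ((Real.measurable_exp.comp (measurable_id.const_mul 2)).add
        measurable_const)
    · filter_upwards [ae_restrict_mem measurableSet_Ioi] with x _
      rw [Real.norm_eq_abs, Real.norm_eq_abs,
        abs_of_nonneg (div_nonneg hy.le (hepos x).le),
        abs_of_nonneg (by positivity : (0:ℝ) ≤ y * Real.exp (-2*x))]
      rw [div_le_iff₀ (hepos x)]
      have hprod : Real.exp (-2*x) * Real.exp (2*x) = 1 := by
        rw [← Real.exp_add]; ring_nf; exact Real.exp_zero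
      have h3 : y * Real.exp (-2*x) * (Real.exp (2*x) + y) = y + y * Real.exp (-2*x) * y := by
        linear_combination y * hprod
      rw [h3]
      nlinarith [mul_pos (mul_pos hy (Real.exp_pos (-2*x))) hy]
  have htend : Tendsto F atTop (nhds 0) := by
    have h2 : Tendsto (fun x : ℝ => 1 + y * Real.exp (-(2*x))) atTop (nhds 1) := by
      have := (tendsto_exp_neg2.const_mul y).const_add (1:ℝ)
      simpa using this
    have h3 : Tendsto F atTop (nhds (-(1/2) * Real.log 1)) :=
      ((Real.continuousAt_log one_ne_zero).tendsto.comp h2).const_mul _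
    simpa using h3
  rw [integral_Ioi_of_hasDerivAt_of_tendsto hcont hderiv hint htend]
  rw [hF]
  simp only [mul_zero, neg_zero, Real.exp_zero, mul_one]
  ring


lemma integrable_log_exp : IntegrableOn (fun t : ℝ => Real.log t * Real.exp (-t)) (Set.Ioi 0) := by
  have hmeas : AEStronglyMeasurable (fun t : ℝ => Real.log t * Real.exp (-t))
      (volume.restrict (Set.Ioi (0:ℝ))) :=
    (Real.measurable_log.mul (Real.measurable_exp.comp measurable_neg)).aestronglyMeasurable
  have h1 : IntegrableOn (fun t : ℝ => Real.log t * Real.exp (-t)) (Set.Ioc 0 1) := by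
    have hb : IntegrableOn (fun t : ℝ => 2 * t ^ (-(1:ℝ)/2)) (Set.Ioc 0 1) := by
      have := (intervalIntegral.intervalIntegrable_rpow' (a := 0) (b := 1)
        (r := -(1:ℝ)/2) (by norm_num))
      rw [intervalIntegrable_iff_integrableOn_Ioc_of_le (by norm_num)] at this
      exact this.const_mul 2
    refine Integrable.mono hb (hmeas.mono_set Set.Ioc_subset_Ioi_self) ?_
    filter_upwards [ae_restrict_mem measurableSet_Ioc] with t ht
    obtain ⟨ht0, ht1⟩ := ht
    have hrp : (0:ℝ) < t ^ (-(1:ℝ)/2) := Real.rpow_pos_of_pos ht0 _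
    rw [Real.norm_eq_abs, Real.norm_eq_abs, abs_mul, abs_of_pos (by positivity : (0:ℝ) < 2 * t ^ (-(1:ℝ)/2))]
    have hlog : |Real.log t| ≤ 2 * t ^ (-(1:ℝ)/2) := by
      have hlt : Real.log t ≤ 0 := Real.log_nonpos (le_of_lt ht0) ht1
      rw [abs_of_nonpos hlt]
      have h3 : Real.log (t ^ (-(1:ℝ)/2)) ≤ t ^ (-(1:ℝ)/2) - 1 := Real.log_le_sub_one_of_pos hrp
      rw [Real.log_rpow ht0] at h3
      nlinarith
    calc |Real.log t| * |Real.exp (-t)| ≤ |Real.log t| * 1 := by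
          apply mul_le_mul_of_nonneg_left _ (abs_nonneg _)
          rw [abs_of_pos (Real.exp_pos _)]
          exact Real.exp_le_one_iff.mpr (by linarith)
      _ ≤ 2 * t ^ (-(1:ℝ)/2) := by simpa using hlog
  have h2 : IntegrableOn (fun t : ℝ => Real.log t * Real.exp (-t)) (Set.Ioi 1) := by
    have hb : IntegrableOn (fun t : ℝ => Real.exp (-t) * t ^ ((2:ℝ)-1)) (Set.Ioi 0) :=
      Real.GammaIntegral_convergent (by norm_num : (0:ℝ) < 2)
    simp only [show (2:ℝ)-1 = 1 by norm_num, Real.rpow_one] at hb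
    have hb' : IntegrableOn (fun t : ℝ => Real.exp (-t) * t) (Set.Ioi 1) :=
      hb.mono_set (fun x hx => show (0:ℝ) < x from lt_trans one_pos hx)
    refine Integrable.mono hb' (hmeas.mono_set (fun x hx => show (0:ℝ) < x from lt_trans one_pos hx)) ?_
    filter_upwards [ae_restrict_mem measurableSet_Ioi] with t ht
    have ht1 : (1:ℝ) < t := ht
    have ht0 : (0:ℝ) < t := lt_trans one_pos ht1
    rw [Real.norm_eq_abs, Real.norm_eq_abs, abs_mul, abs_mul,
      abs_of_pos (Real.exp_pos _), abs_of_pos ht0, mul_comm (Real.exp (-t)) t]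
    apply mul_le_mul_of_nonneg_right _ (le_of_lt (Real.exp_pos _))
    rw [abs_of_nonneg (Real.log_nonneg (le_of_lt ht1))]
    linarith [Real.log_le_sub_one_of_pos ht0]
  have hu : Set.Ioc (0:ℝ) 1 ∪ Set.Ioi 1 = Set.Ioi 0 := Set.Ioc_union_Ioi_eq_Ioi (by norm_num)
  rw [← hu]
  exact h1.union h2

lemma integral_log_exp : ∫ t in Set.Ioi (0:ℝ), Real.log t * Real.exp (-t)
    = -Real.eulerMascheroniConstant := by
  set I := ∫ t in Set.Ioi (0:ℝ), Real.log t * Real.exp (-t) with hI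
  have hc : HasDerivAt Complex.GammaIntegral (↑I) 1 := by
    have h := Complex.hasDerivAt_GammaIntegral (s := 1) (by norm_num)
    have heq : (∫ (t : ℝ) in Set.Ioi 0, (t:ℂ) ^ ((1:ℂ) - 1) * (↑(Real.log t) * ↑(Real.exp (-t)))) = ↑I := by
      rw [hI]
      rw [show ((∫ t in Set.Ioi (0:ℝ), Real.log t * Real.exp (-t) : ℝ) : ℂ)
        = ∫ t in Set.Ioi (0:ℝ), ((Real.log t * Real.exp (-t) : ℝ) : ℂ) from (integral_ofReal).symm]
      apply setIntegral_congr_fun measurableSet_Ioi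
      intro t _
      push_cast
      rw [sub_self, Complex.cpow_zero, one_mul]
    rwa [heq] at h
  have hre : HasDerivAt (fun x : ℝ => (Complex.GammaIntegral ↑x).re) I 1 := by
    simpa using hc.real_of_complex
  have hev : Real.Gamma =ᶠ[nhds (1:ℝ)] (fun x : ℝ => (Complex.GammaIntegral ↑x).re) := by
    filter_upwards [eventually_gt_nhds (by norm_num : (0:ℝ) < 1)] with x hx
    rw [← Complex.Gamma_eq_integral (by simpa using hx), Complex.Gamma_ofReal, Complex.ofReal_re]
  have hd : HasDerivAt Real.Gamma I 1 := hre.congr_of_eventuallyEq hev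
  have := hd.unique Real.hasDerivAt_Gamma_one
  linarith





lemma hexp_int : IntegrableOn (fun y : ℝ => Real.exp (-y)) (Set.Ioi (0:ℝ)) := by
  have := exp_neg_integrableOn_Ioi 0 one_pos
  simpa using this

lemma int_exp_one : ∫ y in Set.Ioi (0:ℝ), Real.exp (-y) = 1 := by
  simpa using integral_exp_neg_Ioi 0

lemma hyexp_int : IntegrableOn (fun y : ℝ => Real.exp (-y) * y) (Set.Ioi (0:ℝ)) := by
  have := Real.GammaIntegral_convergent (by norm_num : (0:ℝ) < 2)
  simp only [show (2:ℝ)-1 = 1 by norm_num, Real.rpow_one] at this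
  exact this

lemma int_exp_mul : ∫ y in Set.Ioi (0:ℝ), Real.exp (-y) * y = 1 := by
  have h := Real.Gamma_eq_integral (by norm_num : (0:ℝ) < 2)
  rw [Real.Gamma_two] at h
  simp only [show (2:ℝ)-1 = 1 by norm_num, Real.rpow_one] at h
  exact h.symm

lemma Bf_meas : Measurable (fun p : ℝ × ℝ => Real.exp (-p.2) * p.2 / (Real.exp (2*p.1) + p.2)) := by
  apply Measurable.div
  · exact (Real.measurable_exp.comp measurable_snd.neg).mul measurable_snd
  · exact (Real.measurable_exp.comp (measurable_fst.const_mul 2)).add measurable_snd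

lemma Bf_integrand_integrable (x : ℝ) (hx : 0 ≤ x) :
    IntegrableOn (fun y => Real.exp (-y) * y / (Real.exp (2*x) + y)) (Set.Ioi 0) := by
  refine Integrable.mono hyexp_int
    ((Bf_meas.comp (measurable_const.prodMk measurable_id)).aestronglyMeasurable) ?_
  filter_upwards [ae_restrict_mem measurableSet_Ioi] with y hy
  have hy0 : (0:ℝ) < y := hy
  have hd : (0:ℝ) < Real.exp (2*x) + y := by positivity
  have he1 : (1:ℝ) ≤ Real.exp (2*x) := Real.one_le_exp (by linarith)
  rw [Real.norm_eq_abs, Real.norm_eq_abs,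
    abs_of_nonneg (div_nonneg (by positivity) hd.le), abs_of_nonneg (by positivity)]
  rw [div_le_iff₀ hd]
  nlinarith [mul_pos (Real.exp_pos (-y)) hy0]

lemma one_sub_Gf (x : ℝ) :
    1 - Gf (-x) = ∫ y in Set.Ioi (0:ℝ), Real.exp (-y) * y / (Real.exp (2*x) + y) := by
  calc 1 - Gf (-x) = (∫ y in Set.Ioi (0:ℝ), Real.exp (-y)) - Gf (-x) := by rw [int_exp_one]
    _ = ∫ y in Set.Ioi (0:ℝ),
        (Real.exp (-y) - Real.exp (-y) / (1 + Real.exp (2*(-x)) * y)) :=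
      (integral_sub hexp_int (Gf_integrand_integrable (-x))).symm
    _ = ∫ y in Set.Ioi (0:ℝ), Real.exp (-y) * y / (Real.exp (2*x) + y) := ?_
  apply setIntegral_congr_fun measurableSet_Ioi
  intro y hy
  have hy0 : (0:ℝ) < y := hy
  have hprod : Real.exp (2*(-x)) * Real.exp (2*x) = 1 := by rw [← Real.exp_add]; ring_nf; exact Real.exp_zero
  have hd1 : (0:ℝ) < 1 + Real.exp (2*(-x)) * y := by positivity
  have hd2 : (0:ℝ) < Real.exp (2*x) + y := by positivity
  have hprod3 : Real.exp (-(2*x)) * Real.exp (2*x) = 1 := by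
    rw [← Real.exp_add]; ring_nf; exact Real.exp_zero
  field_simp
  linear_combination y * hprod3

lemma one_sub_Gf_le (x : ℝ) (hx : 0 < x) : 1 - Gf (-x) ≤ Real.exp (-(2*x)) := by
  rw [one_sub_Gf]
  have hmaj : IntegrableOn (fun y : ℝ => Real.exp (-(2*x)) * (Real.exp (-y) * y)) (Set.Ioi (0:ℝ)) :=
    hyexp_int.const_mul _
  calc (∫ y in Set.Ioi (0:ℝ), Real.exp (-y) * y / (Real.exp (2*x) + y))
      ≤ ∫ y in Set.Ioi (0:ℝ), Real.exp (-(2*x)) * (Real.exp (-y) * y) := by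
        apply setIntegral_mono_on (Bf_integrand_integrable x hx.le) hmaj measurableSet_Ioi
        intro y hy
        have hy0 : (0:ℝ) < y := hy
        have hd : (0:ℝ) < Real.exp (2*x) + y := by positivity
        rw [div_le_iff₀ hd]
        have hprod : Real.exp (-(2*x)) * Real.exp (2*x) = 1 := by
          rw [← Real.exp_add]; ring_nf; exact Real.exp_zero
        have key : Real.exp (-(2*x)) * (Real.exp (-y) * y) * (Real.exp (2*x) + y)
            = Real.exp (-y) * y + Real.exp (-(2*x)) * (Real.exp (-y) * y) * y := by
          linear_combination (Real.exp (-y) * y) * hprod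
        rw [key]
        nlinarith [mul_pos (Real.exp_pos (-(2*x))) (mul_pos (Real.exp_pos (-y)) hy0)]
    _ = Real.exp (-(2*x)) := by rw [integral_const_mul, int_exp_mul, mul_one]

lemma one_sub_Gf_nonneg (x : ℝ) : 0 ≤ 1 - Gf (-x) := by linarith [Gf_le_one (-x)]

lemma swapA : ∫ x in Set.Ioi (0:ℝ), Gf x
    = ∫ y in Set.Ioi (0:ℝ), Real.exp (-y) * ((Real.log (1+y) - Real.log y)/2) := by
  set ν := volume.restrict (Set.Ioi (0:ℝ)) with hν
  have hmeas : AEStronglyMeasurable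
      (Function.uncurry fun x y : ℝ => Real.exp (-y) / (1 + Real.exp (2*x) * y)) (ν.prod ν) :=
    Gf_meas.aestronglyMeasurable
  have hnormint : (fun x => ∫ y, ‖Real.exp (-y) / (1 + Real.exp (2*x) * y)‖ ∂ν) = Gf := by
    funext x
    rw [Gf]
    apply setIntegral_congr_fun measurableSet_Ioi
    intro y hy
    have hy0 : (0:ℝ) < y := hy
    exact norm_of_nonneg (div_nonneg (Real.exp_pos _).le (by positivity))
  have hInt : Integrable (Function.uncurry fun x y : ℝ =>
      Real.exp (-y) / (1 + Real.exp (2*x) * y)) (ν.prod ν) := by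
    rw [integrable_prod_iff hmeas]
    constructor
    · exact Eventually.of_forall fun x => Gf_integrand_integrable x
    · simp only [Function.uncurry_apply_pair]
      rw [hnormint]
      refine Integrable.mono (hexp_int.const_mul 2) ?_ ?_
      · rw [← hnormint]
        exact hmeas.norm.integral_prod_right'
      · filter_upwards [ae_restrict_mem measurableSet_Ioi] with x hx
        rw [Real.norm_eq_abs, Real.norm_eq_abs, abs_of_nonneg (Gf_nonneg x),
          abs_of_nonneg (by positivity : (0:ℝ) ≤ 2 * Real.exp (-x))]
        exact Gf_le x hx
  have hswap := integral_integral_swap hInt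
  calc ∫ x in Set.Ioi (0:ℝ), Gf x = ∫ x, ∫ y, Real.exp (-y) / (1 + Real.exp (2*x) * y) ∂ν ∂ν := rfl
    _ = ∫ y, ∫ x, Real.exp (-y) / (1 + Real.exp (2*x) * y) ∂ν ∂ν := hswap
    _ = ∫ y in Set.Ioi (0:ℝ), Real.exp (-y) * ((Real.log (1+y) - Real.log y)/2) := by
        apply setIntegral_congr_fun measurableSet_Ioi
        intro y hy
        dsimp only
        have hy0 : (0:ℝ) < y := hy
        have : (fun x => Real.exp (-y) / (1 + Real.exp (2*x) * y))
            = fun x => Real.exp (-y) * (1 + Real.exp (2*x) * y)⁻¹ := by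
          funext x; rw [div_eq_mul_inv]
        rw [hν, this, integral_const_mul, ftc1 y hy0]

lemma swapB : ∫ x in Set.Ioi (0:ℝ), (1 - Gf (-x))
    = ∫ y in Set.Ioi (0:ℝ), Real.exp (-y) * (Real.log (1+y)/2) := by
  set ν := volume.restrict (Set.Ioi (0:ℝ)) with hν
  have hmeas : AEStronglyMeasurable
      (Function.uncurry fun x y : ℝ => Real.exp (-y) * y / (Real.exp (2*x) + y)) (ν.prod ν) :=
    Bf_meas.aestronglyMeasurable
  have hnormint : ∀ x : ℝ, 0 < x → (∫ y, ‖Real.exp (-y) * y / (Real.exp (2*x) + y)‖ ∂ν)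
      = 1 - Gf (-x) := by
    intro x hx
    rw [one_sub_Gf]
    apply setIntegral_congr_fun measurableSet_Ioi
    intro y hy
    have hy0 : (0:ℝ) < y := hy
    exact norm_of_nonneg (div_nonneg (by positivity) (by positivity))
  have hInt : Integrable (Function.uncurry fun x y : ℝ =>
      Real.exp (-y) * y / (Real.exp (2*x) + y)) (ν.prod ν) := by
    rw [integrable_prod_iff hmeas]
    constructor
    · rw [hν, ae_restrict_iff' measurableSet_Ioi]
      exact Eventually.of_forall fun x hx => Bf_integrand_integrable x (le_of_lt hx)
    · have hmaj : Integrable (fun x : ℝ => Real.exp (-2*x)) ν := exp_neg_integrableOn_Ioi 0 two_pos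
      refine Integrable.mono hmaj hmeas.norm.integral_prod_right' ?_
      rw [hν]
      filter_upwards [ae_restrict_mem measurableSet_Ioi] with x hx
      simp only [Function.uncurry_apply_pair]
      rw [hnormint x hx]
      rw [Real.norm_eq_abs, Real.norm_eq_abs, abs_of_nonneg (one_sub_Gf_nonneg x),
        abs_of_pos (Real.exp_pos _)]
      calc 1 - Gf (-x) ≤ Real.exp (-(2*x)) := one_sub_Gf_le x hx
        _ = Real.exp (-2*x) := by ring_nf
  have hswap := integral_integral_swap hInt
  calc ∫ x in Set.Ioi (0:ℝ), (1 - Gf (-x))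
      = ∫ x, ∫ y, Real.exp (-y) * y / (Real.exp (2*x) + y) ∂ν ∂ν := by
        rw [hν]
        exact setIntegral_congr_fun measurableSet_Ioi fun x hx => one_sub_Gf x
    _ = ∫ y, ∫ x, Real.exp (-y) * y / (Real.exp (2*x) + y) ∂ν ∂ν := hswap
    _ = ∫ y in Set.Ioi (0:ℝ), Real.exp (-y) * (Real.log (1+y)/2) := by
        apply setIntegral_congr_fun measurableSet_Ioi
        intro y hy
        dsimp only
        have hy0 : (0:ℝ) < y := hy
        have heq : (fun x => Real.exp (-y) * y / (Real.exp (2*x) + y))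
            = fun x => Real.exp (-y) * (y / (Real.exp (2*x) + y)) := by
          funext x; rw [mul_div_assoc]
        rw [hν, heq, integral_const_mul, ftc2 y hy0]





/-- The limiting fluctuation `T` of the rescaled small-world distance has
mean `γ/2`, where `γ` is the Euler–Mascheroni constant. -/
theorem limiting_mean_eulerMascheroni
    {Ω : Type*} [MeasurableSpace Ω] (μ : Measure Ω) [IsProbabilityMeasure μ]
    (T : Ω → ℝ) (hT : Measurable T)
    (htail : ∀ x : ℝ, μ {ω | x < T ω}
      = ENNReal.ofReal (∫ y in Set.Ioi (0 : ℝ),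
          Real.exp (-y) / (1 + Real.exp (2 * x) * y))) :
    ∫ ω, T ω ∂μ = Real.eulerMascheroniConstant / 2 := by
  have htailG : ∀ x : ℝ, μ {ω | x < T ω} = ENNReal.ofReal (Gf x) := htail
  set Tp : Ω → ℝ := fun ω => max (T ω) 0 with hTp_def
  set Tm : Ω → ℝ := fun ω => max (-(T ω)) 0 with hTm_def
  have hTp_meas : Measurable Tp := hT.max measurable_const
  have hTm_meas : Measurable Tm := hT.neg.max measurable_const
  have hTp_nn : 0 ≤ᵐ[μ] Tp := Eventually.of_forall fun ω => le_max_right _ _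
  have hTm_nn : 0 ≤ᵐ[μ] Tm := Eventually.of_forall fun ω => le_max_right _ _
  -- tail of Tp
  have htailp : ∀ t : ℝ, 0 < t → μ {ω | t < Tp ω} = ENNReal.ofReal (Gf t) := by
    intro t ht
    have hset : {ω | t < Tp ω} = {ω | t < T ω} := by
      ext ω
      simp only [hTp_def, Set.mem_setOf_eq, lt_max_iff]
      constructor
      · rintro (h | h)
        · exact h
        · linarith
      · exact Or.inl
    rw [hset, htailG t]
  -- Integrability of Tp
  have hTp_lint := lintegral_eq_lintegral_meas_lt μ hTp_nn hTp_meas.aemeasurable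
  have hTp_fin : ∫⁻ t in Set.Ioi (0:ℝ), μ {ω | t < Tp ω} < ⊤ := by
    have hle : ∫⁻ t in Set.Ioi (0:ℝ), μ {ω | t < Tp ω}
        ≤ ∫⁻ t in Set.Ioi (0:ℝ), ENNReal.ofReal (2 * Real.exp (-t)) := by
      apply setLIntegral_mono
      · exact (ENNReal.measurable_ofReal.comp
          ((Real.measurable_exp.comp measurable_neg).const_mul 2))
      · intro t ht
        rw [htailp t ht]
        exact ENNReal.ofReal_le_ofReal (Gf_le t ht)
    exact lt_of_le_of_lt hle (hexp_int.const_mul 2).lintegral_lt_top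
  have hTp_int : Integrable Tp μ := by
    refine ⟨hTp_meas.aestronglyMeasurable, ?_⟩
    rw [hasFiniteIntegral_iff_ofReal hTp_nn, hTp_lint]
    exact hTp_fin
  -- tail of Tm (a.e.)
  have haeneg : ∀ᵐ t : ℝ, μ {ω | -t ≤ T ω} = μ {ω | -t < T ω} := by
    have h0 := meas_le_ae_eq_meas_lt μ (volume : Measure ℝ) T
    have hq : Measure.QuasiMeasurePreserving (fun t : ℝ => -t) volume volume :=
      (Measure.measurePreserving_neg (volume : Measure ℝ)).quasiMeasurePreserving
    exact hq.ae_eq_comp h0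
  have htailm : ∀ᵐ t : ℝ,
      t ∈ Set.Ioi (0:ℝ) → μ {ω | t < Tm ω} = ENNReal.ofReal (1 - Gf (-t)) := by
    filter_upwards [haeneg] with t h1 ht
    have ht0 : (0:ℝ) < t := ht
    have hset : {ω | t < Tm ω} = {ω | T ω < -t} := by
      ext ω
      simp only [hTm_def, Set.mem_setOf_eq, lt_max_iff]
      constructor
      · rintro (h | h)
        · linarith
        · linarith
      · intro h; exact Or.inl (by linarith)
    have hcompl : {ω | T ω < -t} = {ω | -t ≤ T ω}ᶜ := by
      ext ω; simp [not_le]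
    rw [hset, hcompl, measure_compl (measurableSet_le measurable_const hT) (measure_ne_top μ _)]
    rw [measure_univ, h1, htailG (-t)]
    rw [← ENNReal.ofReal_one, ← ENNReal.ofReal_sub 1 (Gf_nonneg (-t))]
  -- Integrability of Tm
  have hTm_lint := lintegral_eq_lintegral_meas_lt μ hTm_nn hTm_meas.aemeasurable
  have hmaj2 : IntegrableOn (fun t : ℝ => Real.exp (-(2*t))) (Set.Ioi (0:ℝ)) := by
    have := exp_neg_integrableOn_Ioi 0 two_pos
    simpa [neg_mul] using this
  have hTm_fin : ∫⁻ t in Set.Ioi (0:ℝ), μ {ω | t < Tm ω} < ⊤ := by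
    have heq : ∫⁻ t in Set.Ioi (0:ℝ), μ {ω | t < Tm ω}
        = ∫⁻ t in Set.Ioi (0:ℝ), ENNReal.ofReal (1 - Gf (-t)) :=
      setLIntegral_congr_fun_ae measurableSet_Ioi htailm
    have hle : ∫⁻ t in Set.Ioi (0:ℝ), ENNReal.ofReal (1 - Gf (-t))
        ≤ ∫⁻ t in Set.Ioi (0:ℝ), ENNReal.ofReal (Real.exp (-(2*t))) := by
      apply setLIntegral_mono
      · exact ENNReal.measurable_ofReal.comp
          (Real.measurable_exp.comp (measurable_id.const_mul 2).neg)
      · intro t ht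
        exact ENNReal.ofReal_le_ofReal (one_sub_Gf_le t ht)
    rw [heq]
    exact lt_of_le_of_lt hle hmaj2.lintegral_lt_top
  have hTm_int : Integrable Tm μ := by
    refine ⟨hTm_meas.aestronglyMeasurable, ?_⟩
    rw [hasFiniteIntegral_iff_ofReal hTm_nn, hTm_lint]
    exact hTm_fin
  -- T = Tp - Tm
  have hT_eq : T = fun ω => Tp ω - Tm ω :=
    funext fun ω => (max_zero_sub_max_neg_zero_eq_self (T ω)).symm
  have hTp_val : ∫ ω, Tp ω ∂μ = ∫ t in Set.Ioi (0:ℝ), Gf t := by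
    rw [hTp_int.integral_eq_integral_meas_lt hTp_nn]
    apply setIntegral_congr_fun measurableSet_Ioi
    intro t ht
    dsimp only
    rw [measureReal_def, htailp t ht, ENNReal.toReal_ofReal (Gf_nonneg t)]
  have hTm_val : ∫ ω, Tm ω ∂μ = ∫ t in Set.Ioi (0:ℝ), (1 - Gf (-t)) := by
    rw [hTm_int.integral_eq_integral_meas_lt hTm_nn]
    apply setIntegral_congr_ae measurableSet_Ioi
    filter_upwards [htailm] with t h ht
    rw [measureReal_def, h ht, ENNReal.toReal_ofReal (one_sub_Gf_nonneg t)]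
  rw [hT_eq, integral_sub hTp_int hTm_int, hTp_val, hTm_val, swapA, swapB]
  -- final computation
  have hB_int : IntegrableOn (fun y : ℝ => Real.exp (-y) * (Real.log (1+y)/2)) (Set.Ioi 0) := by
    refine Integrable.mono (hyexp_int.const_mul (1/2)) ?_ ?_
    · exact ((Real.measurable_exp.comp measurable_neg).mul
        ((Real.measurable_log.comp (measurable_id.const_add 1)).div_const 2)).aestronglyMeasurable
    · filter_upwards [ae_restrict_mem measurableSet_Ioi] with y hy
      have hy0 : (0:ℝ) < y := hy
      have hl1 : 0 ≤ Real.log (1+y) := Real.log_nonneg (by linarith)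
      have hl2 : Real.log (1+y) ≤ y := by
        have := Real.log_le_sub_one_of_pos (by linarith : (0:ℝ) < 1+y)
        linarith
      rw [Real.norm_eq_abs, Real.norm_eq_abs, abs_of_nonneg (by positivity),
        abs_of_nonneg (by positivity : (0:ℝ) ≤ 1/2 * (Real.exp (-y) * y))]
      nlinarith [Real.exp_pos (-y)]
  have hL_int : IntegrableOn (fun y : ℝ => (1/2) * (Real.log y * Real.exp (-y))) (Set.Ioi 0) :=
    integrable_log_exp.const_mul _
  have hA_int : IntegrableOn
      (fun y : ℝ => Real.exp (-y) * ((Real.log (1+y) - Real.log y)/2)) (Set.Ioi 0) := by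
    have heq2 : (fun y : ℝ => Real.exp (-y) * ((Real.log (1+y) - Real.log y)/2))
        = fun y => Real.exp (-y) * (Real.log (1+y)/2) - (1/2) * (Real.log y * Real.exp (-y)) := by
      funext y; ring
    rw [heq2]; exact hB_int.sub hL_int
  rw [← integral_sub hA_int hB_int]
  have heq3 : (fun y : ℝ => Real.exp (-y) * ((Real.log (1+y) - Real.log y)/2)
      - Real.exp (-y) * (Real.log (1+y)/2))
      = fun y => (-(1/2)) * (Real.log y * Real.exp (-y)) := by
    funext y; ring
  calc ∫ y in Set.Ioi (0:ℝ), (Real.exp (-y) * ((Real.log (1+y) - Real.log y)/2)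
        - Real.exp (-y) * (Real.log (1+y)/2))
      = ∫ y in Set.Ioi (0:ℝ), (-(1/2)) * (Real.log y * Real.exp (-y)) := by rw [heq3]
    _ = (-(1/2)) * ∫ y in Set.Ioi (0:ℝ), Real.log y * Real.exp (-y) := integral_const_mul _ _
    _ = Real.eulerMascheroniConstant / 2 := by rw [integral_log_exp]; ring
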